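/- Let C be a commutative star ring in which 2 is invertible, A a unital *-algebra over C, and qA = (A[[λ]], ⋆) a Hermitian formal deformation of A. Then every projection P_0 ∈ M_n(A) (i.e. P_0² = P_0 and P_0* = P_0) can be deformed into a projection of the deformed matrix algebra: there exist P_r ∈ M_n(A) for r ≥ 1 such that P = P_0 + Σ_{r≥1} P_r λ^r ∈ M_n(A)[[λ]] satisfies P ⋆ P = P and P* = P. -/

import Mathlib

open scoped Matrix

/-- Cauchy-type convolution of two formal series along a family of
coefficient maps `B r : M → N → P`:  `(x ⋆ y) n = ∑_{r+i+j=n} B r (x i) (y j)`. -/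
def fdConv {M N P : Type*} [AddCommMonoid P] (B : ℕ → M → N → P)
    (x : ℕ → M) (y : ℕ → N) : ℕ → P := fun n =>
  ∑ p ∈ Finset.HasAntidiagonal.antidiagonal n, ∑ q ∈ Finset.HasAntidiagonal.antidiagonal p.2, B p.1 (x q.1) (y q.2)

/-- The unit formal series `1 + 0·λ + 0·λ² + ⋯`. -/
def fdOne (A : Type*) [One A] [Zero A] : ℕ → A := fun n => if n = 0 then 1 else 0

/-- An element viewed as a constant (order-zero) formal series. -/
def fdC {A : Type*} [Zero A] (a : A) : ℕ → A := fun n => if n = 0 then a else 0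

/-- Coefficientwise star of a formal series. -/
def fdStar {A : Type*} [Star A] (x : ℕ → A) : ℕ → A := fun n => star (x n)

/-- Action of a scalar series `c ∈ k[[λ]]` on series with coefficients in a `k`-module. -/
def fdSmul {k M : Type*} [Semiring k] [AddCommMonoid M] [Module k M]
    (c : ℕ → k) (x : ℕ → M) : ℕ → M := fun n =>
  ∑ p ∈ Finset.HasAntidiagonal.antidiagonal n, c p.1 • x p.2

/-- Order-by-order extension of a family of maps `T r : E → F` to formal series:
`(T x) n = ∑_{r+j=n} T r (x j)`. -/
def fdMap {E F : Type*} [AddCommMonoid F] (T : ℕ → E → F) (x : ℕ → E) : ℕ → F :=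
  fun n => ∑ p ∈ Finset.HasAntidiagonal.antidiagonal n, T p.1 (x p.2)

/-- A formal deformation (à la Gerstenhaber) of a unital `k`-algebra `A`:
a family of `k`-bilinear cochains `C r` with `C 0` the original product, whose
convolution product on `A[[λ]]` is associative and unital (with the same unit). -/
structure FormalDeformation (k A : Type*) [CommRing k] [Ring A] [Algebra k A] where
  C : ℕ → A →ₗ[k] A →ₗ[k] A
  C_zero : ∀ a b : A, C 0 a b = a * b
  assoc : ∀ x y z : ℕ → A,
    fdConv (fun r a b => C r a b) (fdConv (fun r a b => C r a b) x y) z =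
      fdConv (fun r a b => C r a b) x (fdConv (fun r a b => C r a b) y z)
  one_mul : ∀ x : ℕ → A, fdConv (fun r a b => C r a b) (fdOne A) x = x
  mul_one : ∀ x : ℕ → A, fdConv (fun r a b => C r a b) x (fdOne A) = x

namespace FormalDeformation

variable {k A : Type*} [CommRing k] [Ring A] [Algebra k A]

/-- The deformed product on `A[[λ]]`. -/
def mul (D : FormalDeformation k A) : (ℕ → A) → (ℕ → A) → ℕ → A :=
  fdConv fun r a b => D.C r a b

/-- A deformation of a `*`-algebra is Hermitian if the coefficientwise extension of
the involution is still an involution for the deformed product. -/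
def IsHermitian [StarRing A] (D : FormalDeformation k A) : Prop :=
  ∀ x y : ℕ → A, fdStar (D.mul x y) = D.mul (fdStar y) (fdStar x)

/-- The extension of the deformation cochains to matrices. -/
def matC (D : FormalDeformation k A) (n : ℕ) (r : ℕ)
    (L S : Matrix (Fin n) (Fin n) A) : Matrix (Fin n) (Fin n) A :=
  Matrix.of fun i j => ∑ s, D.C r (L i s) (S s j)

/-- The deformed product on `M_n(A)[[λ]] = M_n(A[[λ]])`. -/
def matMul (D : FormalDeformation k A) (n : ℕ) :
    (ℕ → Matrix (Fin n) (Fin n) A) → (ℕ → Matrix (Fin n) (Fin n) A) →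
      ℕ → Matrix (Fin n) (Fin n) A :=
  fdConv (D.matC n)

/-- The deformed left action of `M_n(A)[[λ]]` on column vectors `A^n[[λ]]`. -/
def mvMul (D : FormalDeformation k A) (n : ℕ) :
    (ℕ → Matrix (Fin n) (Fin n) A) → (ℕ → Fin n → A) → ℕ → Fin n → A :=
  fdConv fun r L v => fun i => ∑ j, D.C r (L i j) (v j)

/-- The deformed right action of `A[[λ]]` on column vectors `A^n[[λ]]`. -/
def vsMul (D : FormalDeformation k A) (n : ℕ) :
    (ℕ → Fin n → A) → (ℕ → A) → ℕ → Fin n → A :=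
  fdConv fun r v a => fun i => D.C r (v i) a

end FormalDeformation
section AuxProof

open Finset

namespace FormalDeformation

variable {k A : Type*} [CommRing k] [Ring A] [Algebra k A]

/-- Type synonym for `ℕ → A` carrying the deformed ring structure. -/
def DS (_D : FormalDeformation k A) : Type _ := ℕ → A

variable (D : FormalDeformation k A)

instance : AddCommGroup D.DS := inferInstanceAs (AddCommGroup (ℕ → A))

lemma mul_add_left (x x' y : ℕ → A) :
    D.mul (x + x') y = D.mul x y + D.mul x' y := by
  funext m
  simp only [mul, fdConv, Pi.add_apply, map_add, LinearMap.add_apply,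
    Finset.sum_add_distrib]

lemma mul_add_right (x y y' : ℕ → A) :
    D.mul x (y + y') = D.mul x y + D.mul x y' := by
  funext m
  simp only [mul, fdConv, Pi.add_apply, map_add, Finset.sum_add_distrib]

lemma mul_zero_left (y : ℕ → A) : D.mul 0 y = 0 := by
  funext m
  simp [mul, fdConv]

lemma mul_zero_right (x : ℕ → A) : D.mul x 0 = 0 := by
  funext m
  simp [mul, fdConv]

instance : Ring D.DS :=
  { (inferInstanceAs (AddCommGroup (ℕ → A)) : AddCommGroup (ℕ → A)) with
    mul := fun x y => D.mul x y
    one := fdOne A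
    mul_assoc := fun x y z => D.assoc x y z
    one_mul := fun x => D.one_mul x
    mul_one := fun x => D.mul_one x
    left_distrib := fun x y z => D.mul_add_right x y z
    right_distrib := fun x y z => D.mul_add_left x y z
    zero_mul := fun x => D.mul_zero_left x
    mul_zero := fun x => D.mul_zero_right x }

/-- The `m`-th coefficient, as an additive monoid hom `D.DS →+ A`. -/
def DScoeff (m : ℕ) : D.DS →+ A where
  toFun x := x m
  map_zero' := rfl
  map_add' _ _ := rfl

variable (n : ℕ)

/-- View a series of matrices as a matrix with series entries. -/
def toMat (x : ℕ → Matrix (Fin n) (Fin n) A) : Matrix (Fin n) (Fin n) D.DS :=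
  Matrix.of fun i j => show D.DS from fun m => x m i j

lemma toMat_injective : Function.Injective (D.toMat n) := by
  intro x y h
  funext m i j
  exact congrFun (congrFun (congrFun h i) j) m

lemma toMat_add (x y : ℕ → Matrix (Fin n) (Fin n) A) :
    D.toMat n (x + y) = D.toMat n x + D.toMat n y := rfl

lemma toMat_mul (x y : ℕ → Matrix (Fin n) (Fin n) A) :
    D.toMat n (D.matMul n x y) = D.toMat n x * D.toMat n y := by
  funext i j
  show (fun m => D.matMul n x y m i j) = ((D.toMat n x * D.toMat n y) i j : D.DS)
  funext m
  have hR : ((D.toMat n x * D.toMat n y) i j : D.DS) m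
      = ∑ s, ∑ p ∈ antidiagonal m, ∑ q ∈ antidiagonal p.2,
          D.C p.1 (x q.1 i s) (y q.2 s j) := by
    have h1 : ((D.toMat n x * D.toMat n y) i j : D.DS) m
        = D.DScoeff m (∑ s, D.toMat n x i s * D.toMat n y s j) := by
      rw [Matrix.mul_apply]; exact rfl
    rw [h1, map_sum]
    rfl
  have hL : D.matMul n x y m i j
      = ∑ p ∈ antidiagonal m, ∑ q ∈ antidiagonal p.2, ∑ s,
          D.C p.1 (x q.1 i s) (y q.2 s j) := by
    show (∑ p ∈ antidiagonal m, ∑ q ∈ antidiagonal p.2,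
        D.matC n p.1 (x q.1) (y q.2)) i j = _
    rw [Matrix.sum_apply]
    refine Finset.sum_congr rfl fun p _ => ?_
    rw [Matrix.sum_apply]
    exact Finset.sum_congr rfl fun q _ => rfl
  rw [hR, hL]
  rw [Finset.sum_comm]
  refine Finset.sum_congr rfl fun p _ => ?_
  rw [Finset.sum_comm]

lemma matMul_assoc (x y z : ℕ → Matrix (Fin n) (Fin n) A) :
    D.matMul n (D.matMul n x y) z = D.matMul n x (D.matMul n y z) := by
  apply D.toMat_injective n
  rw [toMat_mul, toMat_mul, toMat_mul, toMat_mul, mul_assoc]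

lemma matMul_add_left (x x' y : ℕ → Matrix (Fin n) (Fin n) A) :
    D.matMul n (x + x') y = D.matMul n x y + D.matMul n x' y := by
  apply D.toMat_injective n
  rw [toMat_mul, toMat_add, toMat_add, add_mul, toMat_mul, toMat_mul]

lemma matMul_add_right (x y y' : ℕ → Matrix (Fin n) (Fin n) A) :
    D.matMul n x (y + y') = D.matMul n x y + D.matMul n x y' := by
  apply D.toMat_injective n
  rw [toMat_mul, toMat_add, toMat_add, mul_add, toMat_mul, toMat_mul]

lemma matC_zero_left (r : ℕ) (S : Matrix (Fin n) (Fin n) A) :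
    D.matC n r 0 S = 0 := by
  ext i j
  simp [matC]

lemma matC_zero_right (r : ℕ) (L : Matrix (Fin n) (Fin n) A) :
    D.matC n r L 0 = 0 := by
  ext i j
  simp [matC]

lemma matC_zero_eq (L S : Matrix (Fin n) (Fin n) A) :
    D.matC n 0 L S = L * S := by
  ext i j
  simp [matC, D.C_zero, Matrix.mul_apply]

lemma matMul_coeff_congr (x x' y y' : ℕ → Matrix (Fin n) (Fin n) A) (m : ℕ)
    (hx : ∀ i ≤ m, x i = x' i) (hy : ∀ i ≤ m, y i = y' i) :
    D.matMul n x y m = D.matMul n x' y' m := by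
  show (∑ p ∈ Finset.HasAntidiagonal.antidiagonal m, ∑ q ∈ Finset.HasAntidiagonal.antidiagonal p.2,
      D.matC n p.1 (x q.1) (y q.2)) = (∑ p ∈ Finset.HasAntidiagonal.antidiagonal m,
      ∑ q ∈ Finset.HasAntidiagonal.antidiagonal p.2, D.matC n p.1 (x' q.1) (y' q.2))
  refine Finset.sum_congr rfl fun p hp => Finset.sum_congr rfl fun q hq => ?_
  have hp' : p.1 + p.2 = m := Finset.HasAntidiagonal.mem_antidiagonal.mp hp
  have hq' : q.1 + q.2 = p.2 := Finset.HasAntidiagonal.mem_antidiagonal.mp hq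
  rw [hx q.1 (by omega), hy q.2 (by omega)]

lemma matMul_coeff_zero (x y : ℕ → Matrix (Fin n) (Fin n) A) :
    D.matMul n x y 0 = x 0 * y 0 := by
  show (∑ p ∈ antidiagonal 0, ∑ q ∈ antidiagonal p.2,
      D.matC n p.1 (x q.1) (y q.2)) = _
  rw [Finset.Nat.antidiagonal_zero]
  rw [Finset.sum_singleton, Finset.Nat.antidiagonal_zero, Finset.sum_singleton]
  exact D.matC_zero_eq n _ _

end FormalDeformation

/-- The series supported at a single order. -/
def fdSingle {M : Type*} [Zero M] (d : ℕ) (L : M) : ℕ → M := fun j => if j = d then L else 0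

namespace FormalDeformation

variable {k A : Type*} [CommRing k] [Ring A] [Algebra k A]
variable (D : FormalDeformation k A) (n : ℕ)

lemma matMul_single_right (x : ℕ → Matrix (Fin n) (Fin n) A) (d : ℕ)
    (L : Matrix (Fin n) (Fin n) A) :
    D.matMul n x (fdSingle d L) d = x 0 * L := by
  show (∑ p ∈ Finset.HasAntidiagonal.antidiagonal d, ∑ q ∈ Finset.HasAntidiagonal.antidiagonal p.2,
      D.matC n p.1 (x q.1) (fdSingle d L q.2)) = _
  rw [Finset.sum_eq_single ((0 : ℕ), d)]
  · rw [Finset.sum_eq_single ((0 : ℕ), d)]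
    · simp only [fdSingle, if_pos rfl]
      exact D.matC_zero_eq n _ _
    · rintro ⟨a, b⟩ hq hne
      have hab : a + b = d := Finset.HasAntidiagonal.mem_antidiagonal.mp hq
      have hb : b ≠ d := by
        intro hbd
        exact hne (Prod.ext_iff.mpr ⟨by omega, hbd⟩)
      simp [fdSingle, hb, D.matC_zero_right n]
    · intro h
      exact absurd (Finset.HasAntidiagonal.mem_antidiagonal.mpr (zero_add d)) h
  · rintro ⟨a, b⟩ hp hne
    have hab : a + b = d := Finset.HasAntidiagonal.mem_antidiagonal.mp hp
    have hb : b ≠ d := by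
      intro hbd
      exact hne (Prod.ext_iff.mpr ⟨by omega, hbd⟩)
    refine Finset.sum_eq_zero fun q hq => ?_
    have hq' : q.1 + q.2 = b := Finset.HasAntidiagonal.mem_antidiagonal.mp hq
    have : q.2 ≠ d := by omega
    simp [fdSingle, this, D.matC_zero_right n]
  · intro h
    exact absurd (Finset.HasAntidiagonal.mem_antidiagonal.mpr (zero_add d)) h

lemma matMul_single_left (x : ℕ → Matrix (Fin n) (Fin n) A) (d : ℕ)
    (L : Matrix (Fin n) (Fin n) A) :
    D.matMul n (fdSingle d L) x d = L * x 0 := by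
  show (∑ p ∈ Finset.HasAntidiagonal.antidiagonal d, ∑ q ∈ Finset.HasAntidiagonal.antidiagonal p.2,
      D.matC n p.1 (fdSingle d L q.1) (x q.2)) = _
  rw [Finset.sum_eq_single ((0 : ℕ), d)]
  · rw [Finset.sum_eq_single (d, (0 : ℕ))]
    · simp only [fdSingle, if_pos rfl]
      exact D.matC_zero_eq n _ _
    · rintro ⟨a, b⟩ hq hne
      have hab : a + b = d := Finset.HasAntidiagonal.mem_antidiagonal.mp hq
      have ha : a ≠ d := by
        intro had
        exact hne (Prod.ext_iff.mpr ⟨had, by omega⟩)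
      simp [fdSingle, ha, D.matC_zero_left n]
    · intro h
      exact absurd (Finset.HasAntidiagonal.mem_antidiagonal.mpr (add_zero d)) h
  · rintro ⟨a, b⟩ hp hne
    have hab : a + b = d := Finset.HasAntidiagonal.mem_antidiagonal.mp hp
    have hb : b ≠ d := by
      intro hbd
      exact hne (Prod.ext_iff.mpr ⟨by omega, hbd⟩)
    refine Finset.sum_eq_zero fun q hq => ?_
    have hq' : q.1 + q.2 = b := Finset.HasAntidiagonal.mem_antidiagonal.mp hq
    have : q.1 ≠ d := by omega
    simp [fdSingle, this, D.matC_zero_left n]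
  · intro h
    exact absurd (Finset.HasAntidiagonal.mem_antidiagonal.mpr (zero_add d)) h

lemma matMul_single_single (d : ℕ) (hd : 1 ≤ d) (L S : Matrix (Fin n) (Fin n) A) :
    D.matMul n (fdSingle d L) (fdSingle d S) d = 0 := by
  show (∑ p ∈ Finset.HasAntidiagonal.antidiagonal d, ∑ q ∈ Finset.HasAntidiagonal.antidiagonal p.2,
      D.matC n p.1 (fdSingle d L q.1) (fdSingle d S q.2)) = 0
  refine Finset.sum_eq_zero fun p hp => Finset.sum_eq_zero fun q hq => ?_
  have hp' : p.1 + p.2 = d := Finset.HasAntidiagonal.mem_antidiagonal.mp hp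
  have hq' : q.1 + q.2 = p.2 := Finset.HasAntidiagonal.mem_antidiagonal.mp hq
  by_cases h : q.1 = d
  · have : q.2 ≠ d := by omega
    simp [fdSingle, this, D.matC_zero_right n]
  · simp [fdSingle, h, D.matC_zero_left n]

end FormalDeformation

end AuxProof

section AuxProof2

open Finset

/-- Noncommutative-ring algebra used for the induction step. -/
lemma projAlgAux {R : Type*} [Ring R] (P E : R) (hidem : P * P = P) (hc : P * E = E * P) :
    E + P * (E - (P * E + P * E)) + (E - (P * E + P * E)) * P = E - (P * E + P * E) := by
  have hPEP : P * E * P = P * E := by rw [mul_assoc, ← hc, ← mul_assoc, hidem]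
  simp only [mul_sub, sub_mul, mul_add, add_mul, ← mul_assoc, hidem, hPEP]
  rw [← hc]
  abel

namespace FormalDeformation

variable {k A : Type*} [CommRing k] [Ring A] [Algebra k A]
variable (D : FormalDeformation k A)

lemma mul_fdC (a b : A) : D.mul (fdC a) (fdC b) = fun r => D.C r a b := by
  funext m
  show (∑ p ∈ antidiagonal m, ∑ q ∈ antidiagonal p.2,
      D.C p.1 (fdC a q.1) (fdC b q.2)) = D.C m a b
  rw [Finset.sum_eq_single (m, (0 : ℕ))]
  · rw [Finset.Nat.antidiagonal_zero, Finset.sum_singleton]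
    simp [fdC]
  · rintro ⟨u, v⟩ hp hne
    have huv : u + v = m := Finset.HasAntidiagonal.mem_antidiagonal.mp hp
    have hv : v ≠ 0 := by
      intro hv0
      exact hne (Prod.ext_iff.mpr ⟨by omega, hv0⟩)
    refine Finset.sum_eq_zero fun q hq => ?_
    have hq' : q.1 + q.2 = v := Finset.HasAntidiagonal.mem_antidiagonal.mp hq
    by_cases h1 : q.1 = 0
    · have h2 : q.2 ≠ 0 := by omega
      simp [fdC, h2]
    · simp [fdC, h1]
  · intro h
    exact absurd (Finset.HasAntidiagonal.mem_antidiagonal.mpr (add_zero m)) h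

lemma fdStar_fdC [StarRing A] (a : A) : fdStar (fdC a) = fdC (star a) := by
  funext m
  by_cases h : m = 0 <;> simp [fdStar, fdC, h]

lemma star_C [StarRing A] (hD : D.IsHermitian) (r : ℕ) (a b : A) :
    star (D.C r a b) = D.C r (star b) (star a) := by
  have h := congrFun (hD (fdC a) (fdC b)) r
  rw [show fdStar (D.mul (fdC a) (fdC b)) r = star (D.mul (fdC a) (fdC b) r) from rfl,
    D.mul_fdC, fdStar_fdC, fdStar_fdC, D.mul_fdC] at h
  exact h

lemma matC_conj [StarRing A] (hD : D.IsHermitian) (n r : ℕ)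
    (L S : Matrix (Fin n) (Fin n) A) :
    (D.matC n r L S)ᴴ = D.matC n r Sᴴ Lᴴ := by
  ext i j
  simp [matC, Matrix.conjTranspose_apply, star_sum, D.star_C hD]

/-- The recursively constructed truncated projections: `projSeq D n P₀ m` is the
series truncated at order `m`. -/
def projSeq (n : ℕ) (P₀ : Matrix (Fin n) (Fin n) A) : ℕ → ℕ → Matrix (Fin n) (Fin n) A
  | 0 => fun j => if j = 0 then P₀ else 0
  | (m+1) => fun j =>
      if j = m+1 then
        D.matMul n (projSeq n P₀ m) (projSeq n P₀ m) (m+1)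
          - (P₀ * (D.matMul n (projSeq n P₀ m) (projSeq n P₀ m) (m+1))
             + P₀ * (D.matMul n (projSeq n P₀ m) (projSeq n P₀ m) (m+1)))
      else projSeq n P₀ m j

variable (n : ℕ) (P₀ : Matrix (Fin n) (Fin n) A)

lemma projSeq_succ (m j : ℕ) : D.projSeq n P₀ (m+1) j =
    if j = m+1 then
      D.matMul n (D.projSeq n P₀ m) (D.projSeq n P₀ m) (m+1)
        - (P₀ * (D.matMul n (D.projSeq n P₀ m) (D.projSeq n P₀ m) (m+1))
           + P₀ * (D.matMul n (D.projSeq n P₀ m) (D.projSeq n P₀ m) (m+1)))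
    else D.projSeq n P₀ m j := rfl

lemma projSeq_gt : ∀ m j, m < j → D.projSeq n P₀ m j = 0 := by
  intro m
  induction m with
  | zero =>
    intro j hj
    have h : j ≠ 0 := by omega
    simp [projSeq, h]
  | succ m ih =>
    intro j hj
    rw [D.projSeq_succ n P₀ m j, if_neg (by omega)]
    exact ih j (by omega)

lemma projSeq_zero_coeff : ∀ m, D.projSeq n P₀ m 0 = P₀ := by
  intro m
  induction m with
  | zero => simp [projSeq]
  | succ m ih =>
    rw [D.projSeq_succ n P₀ m 0, if_neg (by omega)]
    exact ih

lemma projSeq_stable : ∀ m M j, m ≤ M → j ≤ m → D.projSeq n P₀ M j = D.projSeq n P₀ m j := by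
  intro m M
  induction M with
  | zero =>
    intro j h1 h2
    have : m = 0 := by omega
    subst this; rfl
  | succ M ih =>
    intro j h1 h2
    rcases Nat.lt_or_ge m (M+1) with h | h
    · rw [D.projSeq_succ n P₀ M j, if_neg (by omega)]
      exact ih j (by omega) h2
    · have : m = M + 1 := by omega
      subst this; rfl

/-- Commutation of `P₀` with the order-(m+1) obstruction. -/
lemma projSeq_comm (m : ℕ)
    (IH : ∀ j ≤ m, D.matMul n (D.projSeq n P₀ m) (D.projSeq n P₀ m) j
        = D.projSeq n P₀ m j) :
    P₀ * (D.matMul n (D.projSeq n P₀ m) (D.projSeq n P₀ m) (m+1))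
      = (D.matMul n (D.projSeq n P₀ m) (D.projSeq n P₀ m) (m+1)) * P₀ := by
  set Q := D.projSeq n P₀ m with hQ
  set W := D.matMul n Q Q with hW
  set E := W (m+1) with hE
  have hQ0 : Q 0 = P₀ := D.projSeq_zero_coeff n P₀ m
  have hQgt : Q (m+1) = 0 := D.projSeq_gt n P₀ m (m+1) (by omega)
  have hrepl : ∀ j ≤ m + 1, W j = (Q + fdSingle (m+1) E) j := by
    intro j hj
    by_cases h : j = m + 1
    · subst h
      rw [Pi.add_apply, hQgt, zero_add]
      rw [show fdSingle (m+1) E (m+1) = E from if_pos rfl, hE]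
    · have hj' : j ≤ m := by omega
      rw [IH j hj', Pi.add_apply, show fdSingle (m+1) E j = 0 from if_neg h, add_zero]
  have h1 : D.matMul n Q W (m+1) = E + P₀ * E := by
    rw [D.matMul_coeff_congr n Q Q W (Q + fdSingle (m+1) E) (m+1) (fun _ _ => rfl) hrepl,
      D.matMul_add_right n, Pi.add_apply, D.matMul_single_right n, hQ0, ← hW, ← hE]
  have h2 : D.matMul n W Q (m+1) = E + E * P₀ := by
    rw [D.matMul_coeff_congr n W (Q + fdSingle (m+1) E) Q Q (m+1) hrepl (fun _ _ => rfl),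
      D.matMul_add_left n, Pi.add_apply, D.matMul_single_left n, hQ0, ← hW, ← hE]
  have h3 : D.matMul n W Q = D.matMul n Q W := by
    rw [hW]; exact D.matMul_assoc n Q Q Q
  have h4 := congrFun h3 (m+1)
  rw [h1, h2] at h4
  exact (add_left_cancel h4).symm

lemma projSeq_idem (hP₀idem : P₀ * P₀ = P₀) :
    ∀ m, ∀ j ≤ m, D.matMul n (D.projSeq n P₀ m) (D.projSeq n P₀ m) j
      = D.projSeq n P₀ m j := by
  intro m
  induction m with
  | zero =>
    intro j hj
    interval_cases j
    rw [D.matMul_coeff_zero n, D.projSeq_zero_coeff n P₀ 0, hP₀idem]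
  | succ m ih =>
    intro j hj
    set Q := D.projSeq n P₀ m with hQ
    set E := D.matMul n Q Q (m+1) with hE
    set Pnew := E - (P₀ * E + P₀ * E) with hPnew
    have hQ0 : Q 0 = P₀ := D.projSeq_zero_coeff n P₀ m
    have hQgt : Q (m+1) = 0 := D.projSeq_gt n P₀ m (m+1) (by omega)
    have hsucc : ∀ i, D.projSeq n P₀ (m+1) i = if i = m+1 then Pnew else Q i :=
      fun i => D.projSeq_succ n P₀ m i
    have hQ'eq : ∀ i ≤ m + 1, D.projSeq n P₀ (m+1) i = (Q + fdSingle (m+1) Pnew) i := by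
      intro i hi
      rw [hsucc i, Pi.add_apply]
      by_cases h : i = m + 1
      · subst h
        rw [if_pos rfl, hQgt, zero_add, show fdSingle (m+1) Pnew (m+1) = Pnew from if_pos rfl]
      · rw [if_neg h, show fdSingle (m+1) Pnew i = 0 from if_neg h, add_zero]
    by_cases h : j = m + 1
    · subst h
      rw [D.matMul_coeff_congr n _ (Q + fdSingle (m+1) Pnew) _ (Q + fdSingle (m+1) Pnew)
          (m+1) hQ'eq hQ'eq]
      rw [D.matMul_add_left n, D.matMul_add_right n, D.matMul_add_right n]
      simp only [Pi.add_apply]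
      rw [D.matMul_single_right n, D.matMul_single_left n,
        D.matMul_single_single n (m+1) (by omega), hQ0, ← hE, add_zero]
      rw [hsucc (m+1), if_pos rfl]
      have hc : P₀ * E = E * P₀ := D.projSeq_comm n P₀ m ih
      rw [hPnew]
      exact projAlgAux P₀ E hP₀idem hc
    · have hj' : j ≤ m := by omega
      have hst : ∀ i ≤ j, D.projSeq n P₀ (m+1) i = Q i := by
        intro i hi
        rw [hQ]
        exact D.projSeq_stable n P₀ m (m+1) i (by omega) (by omega)
      rw [D.matMul_coeff_congr n _ Q _ Q j hst hst, ih j hj', hsucc j, if_neg h]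

lemma projSeq_herm [StarRing A] (hD : D.IsHermitian) (hP₀idem : P₀ * P₀ = P₀)
    (hP₀herm : P₀ᴴ = P₀) :
    ∀ m j, (D.projSeq n P₀ m j)ᴴ = D.projSeq n P₀ m j := by
  intro m
  induction m with
  | zero =>
    intro j
    by_cases h : j = 0 <;> simp [projSeq, h, hP₀herm]
  | succ m ih =>
    intro j
    by_cases h : j = m + 1
    · subst h
      set Q := D.projSeq n P₀ m with hQ
      set E := D.matMul n Q Q (m+1) with hE
      have hEherm : Eᴴ = E := by
        rw [hE]
        show ((∑ p ∈ antidiagonal (m+1), ∑ q ∈ antidiagonal p.2,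
            D.matC n p.1 (Q q.1) (Q q.2))ᴴ) = _
        rw [Matrix.conjTranspose_sum]
        refine Finset.sum_congr rfl fun p _ => ?_
        rw [Matrix.conjTranspose_sum]
        have hswap := Finset.Nat.sum_antidiagonal_swap
          (f := fun q : ℕ × ℕ => D.matC n p.1 (Q q.1) (Q q.2)) (n := p.2)
        calc ∑ q ∈ antidiagonal p.2, (D.matC n p.1 (Q q.1) (Q q.2))ᴴ
            = ∑ q ∈ antidiagonal p.2, D.matC n p.1 (Q q.2) (Q q.1) := by
              refine Finset.sum_congr rfl fun q _ => ?_
              rw [D.matC_conj hD n, ih q.2, ih q.1]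
          _ = ∑ q ∈ antidiagonal p.2, D.matC n p.1 (Q q.1) (Q q.2) := hswap
      have hc : P₀ * E = E * P₀ :=
        D.projSeq_comm n P₀ m (D.projSeq_idem n P₀ hP₀idem m)
      rw [D.projSeq_succ n P₀ m (m+1), if_pos rfl, ← hQ, ← hE]
      rw [Matrix.conjTranspose_sub, Matrix.conjTranspose_add, Matrix.conjTranspose_mul,
        hEherm, hP₀herm, ← hc]
    · rw [D.projSeq_succ n P₀ m j, if_neg h]
      exact ih j

end FormalDeformation

end AuxProof2

/-- Every projection (Hermitian idempotent) `P₀ ∈ Mₙ(A)` can be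
deformed into a projection of the deformed matrix algebra `Mₙ(qA)`. -/
theorem projection_deformation {C A : Type*} [CommRing C] [StarRing C]
    [Invertible (2 : C)] [Ring A] [Algebra C A] [StarRing A] [StarModule C A]
    (D : FormalDeformation C A) (hD : D.IsHermitian) (n : ℕ)
    (P₀ : Matrix (Fin n) (Fin n) A)
    (hP₀idem : P₀ * P₀ = P₀) (hP₀herm : P₀ᴴ = P₀) :
    ∃ P : ℕ → Matrix (Fin n) (Fin n) A, P 0 = P₀ ∧
      D.matMul n P P = P ∧ ∀ m, (P m)ᴴ = P m := by
  refine ⟨fun m => D.projSeq n P₀ m m, ?_, ?_, ?_⟩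
  · exact D.projSeq_zero_coeff n P₀ 0
  · funext j
    have hagree : ∀ i ≤ j, (fun m => D.projSeq n P₀ m m) i = D.projSeq n P₀ j i := by
      intro i hi
      exact (D.projSeq_stable n P₀ i j i hi le_rfl).symm
    rw [D.matMul_coeff_congr n _ (D.projSeq n P₀ j) _ (D.projSeq n P₀ j) j hagree hagree]
    exact D.projSeq_idem n P₀ hP₀idem j j le_rfl
  · intro m
    exact D.projSeq_herm n P₀ hD hP₀idem hP₀herm m m
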